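/- Let n and ε be positive real numbers and define φ : (n², ∞) → ℝ by φ(x) = x(1 − n²/x)^{2+ε}. Then for all real numbers x and s with x > n² and s ≥ x/n, (1 − x·φ'(x)/φ(x))·(s − n) + 2n ≤ −εn. -/

import Mathlib

/-- Reaction-term estimate in hyperbolic space: for `φ(x) = x (1 − n²/x)^{2+ε}`,
`x > n²` and `s ≥ x/n` imply `(1 − x φ'(x)/φ(x))(s − n) + 2n ≤ −εn`. -/
theorem stmt_18 (n ε : ℝ) (hn : 0 < n) (hε : 0 < ε)
    (φ : ℝ → ℝ)
    (hφ : ∀ x : ℝ, n ^ 2 < x → φ x = x * (1 - n ^ 2 / x) ^ (2 + ε)) :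
    ∀ x s : ℝ, n ^ 2 < x → x / n ≤ s →
      (1 - x * deriv φ x / φ x) * (s - n) + 2 * n ≤ -(ε * n) := by
  intro x s hx hs
  have hx0 : (0:ℝ) < x := lt_trans (by positivity) hx
  have hxne : x ≠ 0 := hx0.ne'
  have hc : (0:ℝ) < 1 - n ^ 2 / x := by
    rw [sub_pos, div_lt_one hx0]; exact hx
  have h1 : HasDerivAt (fun y : ℝ => 1 - n ^ 2 / y) (n ^ 2 / x ^ 2) x := by
    have h := ((hasDerivAt_inv hxne).const_mul (n ^ 2)).const_sub 1
    have heq : (fun y : ℝ => 1 - n ^ 2 / y) = fun y => 1 - n ^ 2 * y⁻¹ := by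
      funext y; rw [div_eq_mul_inv]
    rw [heq]
    exact h.congr_deriv (by ring)
  have h2 := (Real.hasDerivAt_rpow_const (p := 2 + ε)
      (Or.inl hc.ne')).comp x h1
  have h3 := (hasDerivAt_id x).mul h2
  have hphi : φ =ᶠ[nhds x] fun y => y * (1 - n ^ 2 / y) ^ (2 + ε) := by
    filter_upwards [eventually_gt_nhds hx] with y hy using hφ y hy
  have hderiv : deriv φ x =
      1 * (1 - n ^ 2 / x) ^ (2 + ε) +
        x * ((2 + ε) * (1 - n ^ 2 / x) ^ (2 + ε - 1) * (n ^ 2 / x ^ 2)) :=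
    (h3.congr_of_eventuallyEq hphi).deriv
  have hφx : φ x = x * (1 - n ^ 2 / x) ^ (2 + ε) := hφ x hx
  have ha : (0:ℝ) < x - n ^ 2 := sub_pos.mpr hx
  have hexp : (2 + ε - 1 : ℝ) = 1 + ε := by ring
  have hsplit : (1 - n ^ 2 / x) ^ (2 + ε) =
      (1 - n ^ 2 / x) * (1 - n ^ 2 / x) ^ (1 + ε) := by
    rw [show (2 + ε : ℝ) = 1 + (1 + ε) by ring, Real.rpow_add hc, Real.rpow_one]
  have hq : (0:ℝ) < (1 - n ^ 2 / x) ^ (1 + ε) := Real.rpow_pos_of_pos hc _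
  have hkey : 1 - x * deriv φ x / φ x = -((2 + ε) * n ^ 2 / (x - n ^ 2)) := by
    rw [hderiv, hφx, hexp, hsplit]
    have hxc : x * (1 - n ^ 2 / x) = x - n ^ 2 := by field_simp
    field_simp
    ring_nf
  rw [hkey]
  have hsn : (x - n ^ 2) / n ≤ s - n := by
    have : x / n - n = (x - n ^ 2) / n := by field_simp
    linarith [sub_le_sub_right hs n, this.symm.le]
  have hk : -((2 + ε) * n ^ 2 / (x - n ^ 2)) ≤ 0 := by
    have : 0 ≤ (2 + ε) * n ^ 2 / (x - n ^ 2) := by positivity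
    linarith
  have hmul := mul_le_mul_of_nonpos_left hsn hk
  have hval : -((2 + ε) * n ^ 2 / (x - n ^ 2)) * ((x - n ^ 2) / n) = -((2 + ε) * n) := by
    field_simp
  nlinarith [hmul, hval]
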